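/- Let μ be Lebesgue measure on [0,1), let f : [0,1) → ℝ be measurable, and for each l ∈ ℤ write f_l = f∘T^l where T is an invertible measure-preserving transformation. Suppose that for every δ > 0 and every b ∈ ℕ the set {x ∈ [0,1) : |f_i(x) - f_i(T^{-1}x)| < δ for all -b ≤ i ≤ b} has measure at least ρ for a fixed ρ > 0. If T is ergodic, then f is almost-everywhere constant. -/

import Mathlib

open MeasureTheory

/-- If for a fixed `ρ > 0`, for all `δ > 0` and `b ∈ ℕ`, the set
`{x : |f_i(x) - f_i(T⁻¹x)| < δ for all -b ≤ i ≤ b}` (where `f_l = f ∘ T^l`) has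
Lebesgue measure at least `ρ`, and `T` is ergodic, then `f` is a.e. constant. -/
theorem ae_constant_of_rigidity_along_orbit (T S : ℝ → ℝ)
    (hmapsT : Set.MapsTo T (Set.Ico (0:ℝ) 1) (Set.Ico (0:ℝ) 1))
    (hmapsS : Set.MapsTo S (Set.Ico (0:ℝ) 1) (Set.Ico (0:ℝ) 1))
    (hT : Ergodic T (volume.restrict (Set.Ico (0:ℝ) 1)))
    (hS : MeasurePreserving S (volume.restrict (Set.Ico (0:ℝ) 1))
      (volume.restrict (Set.Ico (0:ℝ) 1)))
    (hinv : ∀ x ∈ Set.Ico (0:ℝ) 1, S (T x) = x ∧ T (S x) = x)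
    -- `iter i` is the `i`-th power of `T` for `i ∈ ℤ` (negative powers via `S = T⁻¹`)
    (iter : ℤ → ℝ → ℝ)
    (hiter : ∀ (i : ℤ) (x : ℝ),
      iter i x = if 0 ≤ i then T^[i.toNat] x else S^[(-i).toNat] x)
    (f : ℝ → ℝ) (hf : MemLp f 2 (volume.restrict (Set.Ico (0:ℝ) 1)))
    (ρ : ℝ) (hρ : 0 < ρ)
    (h : ∀ δ : ℝ, 0 < δ → ∀ b : ℕ,
      ENNReal.ofReal ρ ≤ (volume.restrict (Set.Ico (0:ℝ) 1))
        {x | ∀ i : ℤ, -(b : ℤ) ≤ i → i ≤ (b : ℤ) →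
          |f (iter i x) - f (iter i (S x))| < δ}) :
    ∃ C : ℝ, f =ᵐ[volume.restrict (Set.Ico (0:ℝ) 1)] fun _ => C := by
  set μ := volume.restrict (Set.Ico (0:ℝ) 1) with hμdef
  have hfin : IsFiniteMeasure μ := by
    constructor
    rw [hμdef, Measure.restrict_apply_univ]
    exact measure_Ico_lt_top
  obtain ⟨g, hgsm, hfg⟩ : ∃ g : ℝ → ℝ, StronglyMeasurable g ∧ f =ᵐ[μ] g :=
    ⟨hf.aestronglyMeasurable.mk f, hf.aestronglyMeasurable.stronglyMeasurable_mk,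
      hf.aestronglyMeasurable.ae_eq_mk⟩
  have hgm : Measurable g := hgsm.measurable
  have hSm : Measurable S := hS.measurable
  have hIco : ∀ᵐ x ∂μ, x ∈ Set.Ico (0:ℝ) 1 := ae_restrict_mem measurableSet_Ico
  have hiterfun : ∀ i : ℤ, iter i = if 0 ≤ i then T^[i.toNat] else S^[(-i).toNat] := by
    intro i; funext x; rw [hiter]; split <;> rfl
  have hiterp : ∀ i : ℤ, MeasurePreserving (iter i) μ μ := by
    intro i; rw [hiterfun]; split
    · exact hT.toMeasurePreserving.iterate _
    · exact hS.iterate _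
  -- the null set where f and g differ, saturated under all the iterates
  set M := toMeasurable μ {x | f x ≠ g x} with hMdef
  have hMm : MeasurableSet M := measurableSet_toMeasurable _ _
  have hM0 : μ M = 0 := by
    rw [hMdef, measure_toMeasurable]
    exact hfg
  set E := ⋃ i : ℤ, (iter i ⁻¹' M ∪ S ⁻¹' (iter i ⁻¹' M)) with hEdef
  have hE0 : μ E = 0 := by
    refine measure_iUnion_null fun i => measure_union_null ?_ ?_
    · rw [(hiterp i).measure_preimage hMm.nullMeasurableSet]; exact hM0
    · rw [hS.measure_preimage (((hiterp i).measurable hMm).nullMeasurableSet),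
        (hiterp i).measure_preimage hMm.nullMeasurableSet]
      exact hM0
  -- basic identities for the iterates
  have hiterT : ∀ x ∈ Set.Ico (0:ℝ) 1, ∀ i : ℤ, iter i (T x) = iter (i + 1) x := by
    intro x hx i
    rcases le_or_gt 0 i with hi | hi
    · rw [hiter, hiter, if_pos hi, if_pos (by omega)]
      have hn : (i + 1).toNat = i.toNat + 1 := by omega
      rw [hn, Function.iterate_succ_apply]
    · rw [hiter, if_neg (by omega)]
      have hn : (-i).toNat = (-(i + 1)).toNat + 1 := by omega
      rw [hn, Function.iterate_succ_apply, (hinv x hx).1]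
      rcases le_or_gt 0 (i + 1) with h1 | h1
      · have h2 : i + 1 = 0 := by omega
        rw [hiter, if_pos h1, h2]
        simp
      · rw [hiter, if_neg (by omega)]
  have hiterS : ∀ x ∈ Set.Ico (0:ℝ) 1, ∀ i : ℤ, iter i (S x) = iter (i - 1) x := by
    intro x hx i
    rcases lt_or_ge 0 i with hi | hi
    · rw [hiter, if_pos (by omega)]
      have hn : i.toNat = (i - 1).toNat + 1 := by omega
      rw [hn, Function.iterate_succ_apply, (hinv x hx).2, hiter, if_pos (by omega)]
    · rcases eq_or_lt_of_le hi with hi0 | hi0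
      · rw [hiter, if_pos hi0.ge, hiter, if_neg (by omega)]
        have h1 : ((0:ℤ) - 1) = -1 := by ring
        have h2 : (i.toNat) = 0 := by omega
        have h3 : (-(i - 1)).toNat = (-i).toNat + 1 := by omega
        rw [h2, h3, Function.iterate_succ_apply]
        have h4 : (-i).toNat = 0 := by omega
        rw [h4]
        rfl
      · rw [hiter, if_neg (by omega), hiter, if_neg (by omega)]
        have hn : (-(i - 1)).toNat = (-i).toNat + 1 := by omega
        rw [hn, Function.iterate_succ_apply]
  -- key step: for every δ > 0, a.e. |g x - g (S x)| < δ
  have key : ∀ δ : ℝ, 0 < δ → ∀ᵐ x ∂μ, |g x - g (S x)| < δ := by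
    intro δ hδ
    set B : ℕ → Set ℝ := fun b =>
      {x | ∀ i : ℤ, -(b : ℤ) ≤ i → i ≤ (b : ℤ) →
        |g (iter i x) - g (iter i (S x))| < δ} with hBdef
    have hBm : ∀ b, MeasurableSet (B b) := by
      intro b
      have hEq : B b = ⋂ (i : ℤ) (_ : -(b:ℤ) ≤ i) (_ : i ≤ (b:ℤ)),
          {x | |g (iter i x) - g (iter i (S x))| < δ} := by
        ext x; simp [hBdef]
      rw [hEq]
      refine MeasurableSet.iInter fun i => MeasurableSet.iInter fun _ =>
        MeasurableSet.iInter fun _ => ?_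
      exact measurableSet_lt
        ((( hgm.comp (hiterp i).measurable).sub
          (hgm.comp ((hiterp i).measurable.comp hSm))).abs) measurable_const
    have hρB : ∀ b, ENNReal.ofReal ρ ≤ μ (B b) := by
      intro b
      refine le_trans (h δ hδ b) ?_
      have hfgM : ∀ y : ℝ, y ∉ M → f y = g y := by
        intro y hy
        by_contra hne
        exact hy (subset_toMeasurable _ _ hne)
      have hsub : {x | ∀ i : ℤ, -(b : ℤ) ≤ i → i ≤ (b : ℤ) →
          |f (iter i x) - f (iter i (S x))| < δ} ⊆ B b ∪ E := by
        intro x hx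
        by_cases hxE : x ∈ E
        · exact Or.inr hxE
        · refine Or.inl fun i h1 h2 => ?_
          have hx1 : iter i x ∉ M := fun hc =>
            hxE (Set.mem_iUnion.2 ⟨i, Or.inl hc⟩)
          have hx2 : iter i (S x) ∉ M := fun hc =>
            hxE (Set.mem_iUnion.2 ⟨i, Or.inr hc⟩)
          rw [← hfgM _ hx1, ← hfgM _ hx2]
          exact hx i h1 h2
      calc μ _ ≤ μ (B b ∪ E) := measure_mono hsub
        _ ≤ μ (B b) + μ E := measure_union_le _ _
        _ = μ (B b) := by rw [hE0, add_zero]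
    set A := ⋂ b : ℕ, B b with hAdef
    have hAm : MeasurableSet A := MeasurableSet.iInter hBm
    have hρA : ENNReal.ofReal ρ ≤ μ A := by
      have hd : Directed (· ⊇ ·) B := by
        refine (directed_of_isDirected_le ?_)
        intro a b hab x hx i h1 h2
        refine hx i (le_trans ?_ h1) (h2.trans ?_)
        · simpa using neg_le_neg (Int.ofNat_le.2 hab)
        · exact_mod_cast hab
      rw [hAdef, Directed.measure_iInter (fun b => (hBm b).nullMeasurableSet) hd
        ⟨0, measure_ne_top μ _⟩]
      exact le_iInf fun b => hρB b
    have hAmem : ∀ x : ℝ, x ∈ A ↔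
        ∀ i : ℤ, |g (iter i x) - g (iter i (S x))| < δ := by
      intro x
      constructor
      · intro hx i
        have h1 : i ≤ ((i.natAbs : ℕ) : ℤ) := Int.le_natAbs
        have h2 : -((i.natAbs : ℕ) : ℤ) ≤ i := by
          rw [neg_le]
          have := Int.le_natAbs (a := -i)
          rwa [Int.natAbs_neg] at this
        exact Set.mem_iInter.1 hx i.natAbs i h2 h1
      · intro hx
        exact Set.mem_iInter.2 fun b i _ _ => hx i
    have hAinv : (T ⁻¹' A : Set ℝ) =ᵐ[μ] A := by
      refine Filter.eventuallyEq_set.2 (hIco.mono fun x hx => ?_)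
      simp only [Set.mem_preimage, hAmem]
      constructor
      · intro h' i
        have := h' (i - 1)
        rw [hiterT x hx, (hinv x hx).1, show i - 1 + 1 = i from by ring] at this
        rw [hiterS x hx]
        exact this
      · intro h' i
        have := h' (i + 1)
        rw [hiterS x hx, show i + 1 - 1 = i from by ring] at this
        rw [hiterT x hx, (hinv x hx).1]
        exact this
    rcases hT.quasiErgodic.ae_empty_or_univ₀ hAm.nullMeasurableSet hAinv with h0 | h1
    · exfalso
      have : μ A = 0 := by
        rw [measure_congr h0, measure_empty]
      rw [this] at hρA
      exact (ENNReal.ofReal_pos.2 hρ).ne' (le_antisymm hρA zero_le)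
    · have hAe : ∀ᵐ x ∂μ, x ∈ A := by
        have := ae_eq_univ.mp h1
        exact (ae_iff.2 (by exact this))
      refine hAe.mono fun x hx => ?_
      have := (hAmem x).1 hx 0
      have h0 : iter 0 x = x := by rw [hiter]; simp
      have h0' : iter 0 (S x) = S x := by rw [hiter]; simp
      rwa [h0, h0'] at this
  -- hence g ∘ S = g a.e.
  have hgS : (fun x => g (S x)) =ᵐ[μ] g := by
    have hall : ∀ᵐ x ∂μ, ∀ n : ℕ, |g x - g (S x)| < 1 / ((n : ℝ) + 1) :=
      ae_all_iff.2 fun n => key _ (by positivity)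
    refine hall.mono fun x hx => ?_
    have habs : |g x - g (S x)| = 0 := by
      by_contra hne
      have hpos : 0 < |g x - g (S x)| := lt_of_le_of_ne (abs_nonneg _) (Ne.symm hne)
      obtain ⟨n, hn⟩ := exists_nat_one_div_lt hpos
      exact lt_asymm hn (hx n)
    have := sub_eq_zero.mp (abs_eq_zero.mp habs)
    exact this.symm
  -- transfer to f and apply ergodicity
  have hqmp : Measure.QuasiMeasurePreserving T μ μ :=
    hT.toMeasurePreserving.quasiMeasurePreserving
  have h1 : f ∘ T =ᵐ[μ] g ∘ T := hqmp.ae_eq_comp hfg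
  have h2 : (fun x => g (S x)) ∘ T =ᵐ[μ] g ∘ T := hqmp.ae_eq_comp hgS
  have h3 : (fun x => g (S x)) ∘ T =ᵐ[μ] g := by
    refine hIco.mono fun x hx => ?_
    show g (S (T x)) = g x
    rw [(hinv x hx).1]
  have hcomp : f ∘ T =ᵐ[μ] f :=
    h1.trans ((h2.symm.trans h3).trans hfg.symm)
  obtain ⟨c, hc⟩ := hT.ae_eq_const_of_ae_eq_comp_ae hf.aestronglyMeasurable hcomp
  exact ⟨c, hc⟩
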